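/- The dominant chamber C is a fundamental domain for the action of the Weyl group W on the Tits cone Y: every W-orbit in Y intersects C in exactly one point. -/

import Mathlib

/-- The data of the standard representation of a Kac–Moody Weyl group attached to a
(symmetrizable or not) generalized Cartan matrix: a real vector space `V` (playing the
role of `𝔥ℝ*`), simple roots `α i ∈ V`, coroot functionals `λ ↦ λ(h i)`, such that the
matrix `a i j = (α j)(h i)` is a generalized Cartan matrix. -/
structure GCMRep (I V : Type*) [AddCommGroup V] [Module ℝ V] where
  /-- the simple roots `α i ∈ 𝔥ℝ*` -/
  α : I → V
  /-- evaluation against the simple coroots: `coroot i λ = λ(h i)` -/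
  coroot : I → V →ₗ[ℝ] ℝ
  indep : LinearIndependent ℝ α
  indepCoroot : LinearIndependent ℝ coroot
  diag : ∀ i, coroot i (α i) = 2
  offdiag_nonpos : ∀ i j, i ≠ j → coroot i (α j) ≤ 0
  integral : ∀ i j, ∃ n : ℤ, coroot i (α j) = (n : ℝ)
  symm_zero : ∀ i j, coroot i (α j) = 0 → coroot j (α i) = 0

namespace GCMRep

variable {I V : Type*} [AddCommGroup V] [Module ℝ V] (s : GCMRep I V)

/-- The simple reflection `r i : λ ↦ λ - λ(h i) • α i` as a linear endomorphism. -/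
def reflMap (i : I) : V →ₗ[ℝ] V :=
  LinearMap.id - LinearMap.smulRight (s.coroot i) (s.α i)

lemma reflMap_involutive (i : I) : Function.Involutive (s.reflMap i) := by
  intro v
  have h2 := s.diag i
  simp only [reflMap, LinearMap.sub_apply, LinearMap.id_apply, LinearMap.smulRight_apply,
    map_sub, map_smul, smul_eq_mul, h2]
  module

/-- The simple reflection `r i` as a linear automorphism of `V`. -/
def reflE (i : I) : V ≃ₗ[ℝ] V :=
  LinearEquiv.ofInvolutive (s.reflMap i) (s.reflMap_involutive i)

/-- The Weyl group `W(A)` as the group of linear automorphisms of `V = 𝔥ℝ*` generated by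
the simple reflections. -/
def weyl : Subgroup (V ≃ₗ[ℝ] V) :=
  Subgroup.closure (Set.range s.reflE)

/-- The (closed) dominant Weyl chamber `C = { λ : λ(h i) ≥ 0 for all i }`. -/
def domChamber : Set V := {x | ∀ i, 0 ≤ s.coroot i x}

/-- The Tits cone `Y = W · C`. -/
def titsCone : Set V := {y | ∃ w ∈ s.weyl, ∃ x ∈ s.domChamber, y = w x}

end GCMRep

/- ======================================================================== -/
/- Auxiliary development                                                    -/
/- ======================================================================== -/

namespace GCMRep

variable {I V : Type*} [AddCommGroup V] [Module ℝ V] (P : GCMRep I V)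

lemma reflE_apply (i : I) (v : V) : P.reflE i v = v - P.coroot i v • P.α i := rfl

lemma reflE_mul_self (i : I) : P.reflE i * P.reflE i = 1 := by
  refine LinearEquiv.ext fun v => ?_
  show P.reflE i (P.reflE i v) = v
  exact P.reflMap_involutive i v

lemma reflE_inv (i : I) : (P.reflE i)⁻¹ = P.reflE i :=
  inv_eq_of_mul_eq_one_left (P.reflE_mul_self i)

lemma reflE_fix (i : I) {v : V} (h : P.coroot i v = 0) : P.reflE i v = v := by
  rw [reflE_apply, h, zero_smul, sub_zero]

lemma reflE_alpha_self (i : I) : P.reflE i (P.α i) = -(P.α i) := by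
  rw [reflE_apply, P.diag]
  module

lemma reflE_mem_weyl (i : I) : P.reflE i ∈ P.weyl :=
  Subgroup.subset_closure ⟨i, rfl⟩

/-- Product of the simple reflections along a word. -/
def wordProd (ω : List I) : V ≃ₗ[ℝ] V := (ω.map P.reflE).prod

@[simp] lemma wordProd_nil : P.wordProd ([] : List I) = 1 := rfl

@[simp] lemma wordProd_cons (a : I) (ω : List I) :
    P.wordProd (a :: ω) = P.reflE a * P.wordProd ω := by
  simp [wordProd]

lemma wordProd_singleton (a : I) : P.wordProd [a] = P.reflE a := by
  simp [wordProd]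

lemma wordProd_append (u v : List I) :
    P.wordProd (u ++ v) = P.wordProd u * P.wordProd v := by
  simp [wordProd]

lemma wordProd_concat (u : List I) (a : I) :
    P.wordProd (u ++ [a]) = P.wordProd u * P.reflE a := by
  rw [wordProd_append, wordProd_singleton]

lemma wordProd_reverse (ω : List I) : P.wordProd ω.reverse = (P.wordProd ω)⁻¹ := by
  induction ω with
  | nil => simp
  | cons a ω ih =>
    rw [List.reverse_cons, wordProd_concat, ih, wordProd_cons, mul_inv_rev, reflE_inv]

lemma wordProd_mem_weyl (ω : List I) : P.wordProd ω ∈ P.weyl := by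
  induction ω with
  | nil => exact one_mem _
  | cons a ω ih =>
    rw [wordProd_cons]
    exact mul_mem (P.reflE_mem_weyl a) ih

lemma exists_word_of_mem_weyl {w : V ≃ₗ[ℝ] V} (hw : w ∈ P.weyl) :
    ∃ ω : List I, P.wordProd ω = w := by
  induction hw using Subgroup.closure_induction with
  | mem x hx =>
    obtain ⟨i, rfl⟩ := hx
    exact ⟨[i], P.wordProd_singleton i⟩
  | one => exact ⟨[], rfl⟩
  | mul x y hx hy ihx ihy =>
    obtain ⟨u, rfl⟩ := ihx
    obtain ⟨v, rfl⟩ := ihy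
    exact ⟨u ++ v, P.wordProd_append u v⟩
  | inv x hx ihx =>
    obtain ⟨u, rfl⟩ := ihx
    exact ⟨u.reverse, P.wordProd_reverse u⟩

/-- Length of an element of the Weyl group: minimal length of a word of simple
reflections representing it. -/
noncomputable def wlen (w : V ≃ₗ[ℝ] V) : ℕ :=
  sInf {n | ∃ ω : List I, P.wordProd ω = w ∧ ω.length = n}

lemma wlen_le {w : V ≃ₗ[ℝ] V} {ω : List I} (h : P.wordProd ω = w) : P.wlen w ≤ ω.length := by
  have hmem : ω.length ∈ {n | ∃ ω' : List I, P.wordProd ω' = w ∧ ω'.length = n} := ⟨ω, h, rfl⟩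
  exact Nat.sInf_le hmem

lemma exists_word_wlen {w : V ≃ₗ[ℝ] V} (hw : w ∈ P.weyl) :
    ∃ ω : List I, P.wordProd ω = w ∧ ω.length = P.wlen w := by
  obtain ⟨ω, hω⟩ := P.exists_word_of_mem_weyl hw
  have hne : {n | ∃ ω' : List I, P.wordProd ω' = w ∧ ω'.length = n}.Nonempty :=
    ⟨ω.length, ω, hω, rfl⟩
  exact Nat.sInf_mem hne

lemma wlen_inv_le {w : V ≃ₗ[ℝ] V} (hw : w ∈ P.weyl) : P.wlen w⁻¹ ≤ P.wlen w := by
  obtain ⟨ω, h, hl⟩ := P.exists_word_wlen hw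
  have h2 : P.wordProd ω.reverse = w⁻¹ := by rw [P.wordProd_reverse, h]
  have := P.wlen_le h2
  simpa [hl] using this

lemma wlen_inv {w : V ≃ₗ[ℝ] V} (hw : w ∈ P.weyl) : P.wlen w⁻¹ = P.wlen w := by
  refine le_antisymm (P.wlen_inv_le hw) ?_
  have := P.wlen_inv_le (inv_mem hw)
  simpa using this

/- ---------------- positivity ---------------- -/

section Pos

variable [Fintype I]

/-- `v` is a nonnegative combination of the simple roots. -/
def IsPos (v : V) : Prop := ∃ c : I → ℝ, (∀ i, 0 ≤ c i) ∧ v = ∑ i, c i • P.α i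

lemma isPos_alpha (i : I) : P.IsPos (P.α i) := by
  classical
  refine ⟨fun j => if j = i then 1 else 0, fun j => ?_, ?_⟩
  · dsimp only
    split <;> norm_num
  · simp [ite_smul]

lemma isPos_combo {v w : V} (a b : ℝ) (ha : 0 ≤ a) (hb : 0 ≤ b)
    (hv : P.IsPos v) (hw : P.IsPos w) : P.IsPos (a • v + b • w) := by
  obtain ⟨c, hc, rfl⟩ := hv
  obtain ⟨d, hd, rfl⟩ := hw
  refine ⟨fun i => a * c i + b * d i,
    fun i => add_nonneg (mul_nonneg ha (hc i)) (mul_nonneg hb (hd i)), ?_⟩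
  rw [Finset.smul_sum, Finset.smul_sum, ← Finset.sum_add_distrib]
  exact Finset.sum_congr rfl fun i _ => by rw [smul_smul, smul_smul, add_smul]

end Pos

/- ---------------- the dual representation ---------------- -/

/-- The dual (contragredient) representation, with roots and coroots swapped. -/
noncomputable def dual : GCMRep I (Module.Dual ℝ V) where
  α := P.coroot
  coroot i := Module.Dual.eval ℝ V (P.α i)
  indep := P.indepCoroot
  indepCoroot := P.indep.map' (Module.Dual.eval ℝ V) (Module.eval_ker ℝ V)
  diag i := P.diag i
  offdiag_nonpos i j h := P.offdiag_nonpos j i h.symm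
  integral i j := P.integral j i
  symm_zero i j h := P.symm_zero j i h

lemma dual_reflE_apply (i : I) (f : Module.Dual ℝ V) (x : V) :
    P.dual.reflE i f x = f (P.reflE i x) := by
  rw [reflE_apply, reflE_apply]
  show (f - (f (P.α i)) • P.coroot i) x = f (x - P.coroot i x • P.α i)
  rw [LinearMap.sub_apply, LinearMap.smul_apply, map_sub, map_smul]
  simp [smul_eq_mul, mul_comm]

lemma dual_wordProd_apply (ω : List I) (f : Module.Dual ℝ V) (x : V) :
    P.dual.wordProd ω f x = f (P.wordProd ω.reverse x) := by
  induction ω generalizing f x with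
  | nil => simp
  | cons a ω ih =>
    have h1 : P.dual.wordProd (a :: ω) f x
        = (P.dual.reflE a) (P.dual.wordProd ω f) x := by rw [wordProd_cons]; rfl
    rw [h1, P.dual_reflE_apply a _ x, ih, List.reverse_cons, wordProd_concat]
    rfl

end GCMRep

/- ---------------- alternating words ---------------- -/

namespace GCMRep

/-- The alternating word of length `k` over `{s,t}` ending in `t`. -/
def awt {I : Type*} (s t : I) : ℕ → List I
  | 0 => []
  | k+1 => (if Even k then t else s) :: awt s t k

variable {I V : Type*} [AddCommGroup V] [Module ℝ V] (P : GCMRep I V)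
variable (s t : I)

lemma awt_head (k : ℕ) : awt s t (k+1) = (if Even k then t else s) :: awt s t k := rfl

@[simp] lemma awt_length (k : ℕ) : (awt s t k).length = k := by
  induction k with
  | zero => rfl
  | succ k ih => rw [awt_head, List.length_cons, ih]

lemma awt_mem (k : ℕ) : ∀ x ∈ awt s t k, x = s ∨ x = t := by
  induction k with
  | zero => simp [awt]
  | succ k ih =>
    intro x hx
    rw [awt_head, List.mem_cons] at hx
    rcases hx with rfl | hx
    · split <;> simp
    · exact ih x hx

lemma awt_snoc (k : ℕ) : awt s t (k+1) = awt t s k ++ [t] := by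
  induction k with
  | zero => simp [awt]
  | succ k ih =>
    rw [awt_head s t (k+1), ih, awt_head t s k]
    rw [List.cons_append]
    congr 1
    by_cases h : Even k <;> simp [Nat.even_add_one, h]

lemma awt_chain (hst : s ≠ t) (k : ℕ) : (awt s t k).Chain' (· ≠ ·) := by
  induction k with
  | zero => simp [awt, List.Chain']
  | succ k ih =>
    cases k with
    | zero => simp [awt, List.Chain']
    | succ k' =>
      rw [awt_head s t k'] at ih
      rw [awt_head s t (k'+1), awt_head s t k']
      refine List.isChain_cons_cons.mpr ⟨?_, ih⟩
      by_cases h : Even k' <;> simp [Nat.even_add_one, h, hst, hst.symm]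

lemma eq_awt_of_chain (hst : s ≠ t) :
    ∀ ω : List I, (∀ x ∈ ω, x = s ∨ x = t) → ω.Chain' (· ≠ ·) →
      ∀ (h : ω ≠ []), ω.getLast h = t → ω = awt s t ω.length := by
  intro ω
  induction ω with
  | nil => intro _ _ h; exact absurd rfl h
  | cons a ω ih =>
    intro hmem hch hne hlast
    cases ω with
    | nil =>
      have ha : a = t := hlast
      subst ha
      rfl
    | cons b ω' =>
      have hne' : (b :: ω') ≠ [] := by simp
      have hlast' : (b :: ω').getLast hne' = t := by
        rw [← hlast]; exact (List.getLast_cons hne').symm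
      have hmem' : ∀ x ∈ b :: ω', x = s ∨ x = t := fun x hx => hmem x (List.mem_cons_of_mem _ hx)
      have hch' : (b :: ω').Chain' (· ≠ ·) := hch.tail
      have hIH := ih hmem' hch' hne' hlast'
      have hab : a ≠ b := (List.isChain_cons_cons.mp hch).1
      have ha := hmem a (by simp)
      have hb : b = if Even ω'.length then t else s := by
        have h2 := hIH
        rw [List.length_cons, awt_head] at h2
        exact (List.cons.injEq _ _ _ _ ▸ h2).1
      have hIH2 : b :: ω' = awt s t (ω'.length + 1) := by
        rw [← List.length_cons (a := b) (as := ω')]; exact hIH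
      rw [List.length_cons, List.length_cons, awt_head, ← hIH2]
      congr 1
      rcases ha with rfl | rfl
      · -- a = s : need (if Even (ω'.length + 1) then t else s) = s, i.e. ¬ Even (len+1)
        by_cases h : Even ω'.length
        · simp [Nat.even_add_one, h]
        · exfalso; apply hab; rw [hb]; simp [h]
      · by_cases h : Even ω'.length
        · exfalso; apply hab; rw [hb]; simp [h]
        · simp [Nat.even_add_one, h]

/- ---------------- coefficients along alternating words ---------------- -/

/-- Coefficient sequence of `(alternating word) · α s` in the basis `(α s, α t)`. -/
def xyseq (p q : ℝ) : ℕ → ℝ × ℝ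
  | 0 => (1, 0)
  | k+1 => if Even k then ((xyseq p q k).1, q * (xyseq p q k).1 - (xyseq p q k).2)
           else (p * (xyseq p q k).2 - (xyseq p q k).1, (xyseq p q k).2)

lemma wordProd_awt_alpha (p q : ℝ) (hp : P.coroot s (P.α t) = -p) (hq : P.coroot t (P.α s) = -q)
    (k : ℕ) :
    P.wordProd (awt s t k) (P.α s) = (xyseq p q k).1 • P.α s + (xyseq p q k).2 • P.α t := by
  induction k with
  | zero => simp [awt, xyseq]
  | succ k ih =>
    rw [awt_head, wordProd_cons]
    have h1 : (P.reflE (if Even k then t else s) * P.wordProd (awt s t k)) (P.α s)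
        = P.reflE (if Even k then t else s) (P.wordProd (awt s t k) (P.α s)) := rfl
    rw [h1, ih]
    by_cases hk : Even k
    · rw [if_pos hk, reflE_apply]
      simp only [map_add, map_smul, hq, P.diag t, smul_eq_mul]
      have hxy : xyseq p q (k+1) = ((xyseq p q k).1, q * (xyseq p q k).1 - (xyseq p q k).2) := by
        rw [xyseq, if_pos hk]
      rw [hxy]
      module
    · rw [if_neg hk, reflE_apply]
      simp only [map_add, map_smul, hp, P.diag s, smul_eq_mul]
      have hxy : xyseq p q (k+1) = (p * (xyseq p q k).2 - (xyseq p q k).1, (xyseq p q k).2) := by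
        rw [xyseq, if_neg hk]
      rw [hxy]
      module

lemma xyseq_nonneg {p q : ℝ} (hp : 0 ≤ p) (hq : 0 ≤ q) (h4 : 4 ≤ p * q) (k : ℕ) :
    0 ≤ (xyseq p q k).1 ∧ 0 ≤ (xyseq p q k).2 := by
  have key : ∀ k : ℕ, 0 ≤ (xyseq p q k).1 ∧ 0 ≤ (xyseq p q k).2 ∧
      (Even k → 2 * (xyseq p q k).2 ≤ q * (xyseq p q k).1) ∧
      (¬Even k → 2 * (xyseq p q k).1 ≤ p * (xyseq p q k).2) := by
    intro k
    induction k with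
    | zero =>
      refine ⟨by norm_num [xyseq], by norm_num [xyseq], fun _ => by norm_num [xyseq]; linarith, fun h => absurd Even.zero h⟩
    | succ k ih =>
      obtain ⟨hX, hY, hE, hO⟩ := ih
      by_cases hk : Even k
      · have h2 := hE hk
        have hk' : ¬ Even (k+1) := by simp [Nat.even_add_one, hk]
        have hxy : xyseq p q (k+1) = ((xyseq p q k).1, q * (xyseq p q k).1 - (xyseq p q k).2) := by
          rw [xyseq, if_pos hk]
        rw [hxy]
        have A : p * (2 * (xyseq p q k).2) ≤ p * (q * (xyseq p q k).1) :=
          mul_le_mul_of_nonneg_left h2 hp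
        have B : 4 * (xyseq p q k).1 ≤ (p * q) * (xyseq p q k).1 :=
          mul_le_mul_of_nonneg_right h4 hX
        dsimp only
        refine ⟨hX, by linarith, fun h => absurd h hk', fun _ => by nlinarith [A, B]⟩
      · have h2 := hO hk
        have hk' : Even (k+1) := Nat.even_add_one.mpr hk
        have hxy : xyseq p q (k+1) = (p * (xyseq p q k).2 - (xyseq p q k).1, (xyseq p q k).2) := by
          rw [xyseq, if_neg hk]
        rw [hxy]
        have A : q * (2 * (xyseq p q k).1) ≤ q * (p * (xyseq p q k).2) :=
          mul_le_mul_of_nonneg_left h2 hq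
        have B : 4 * (xyseq p q k).2 ≤ (p * q) * (xyseq p q k).2 :=
          mul_le_mul_of_nonneg_right h4 hY
        dsimp only
        refine ⟨by linarith, hY, fun _ => by nlinarith [A, B], fun h => absurd hk' h⟩
  exact ⟨(key k).1, (key k).2.1⟩

end GCMRep

namespace GCMRep

variable {I V : Type*} [AddCommGroup V] [Module ℝ V] (P : GCMRep I V)
variable (s t : I)

/- ---------------- rank two computations ---------------- -/

lemma dec_exists (p q : ℝ) (hp : P.coroot s (P.α t) = -p) (hq : P.coroot t (P.α s) = -q)
    (h4 : p * q ≠ 4) (v : V) :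
    ∃ a b : ℝ, ∃ w : V, P.coroot s w = 0 ∧ P.coroot t w = 0 ∧
      v = a • P.α s + b • P.α t + w := by
  have h4' : 4 - p * q ≠ 0 := fun h => h4 (by linarith)
  refine ⟨(2 * P.coroot s v + p * P.coroot t v) / (4 - p * q),
          (q * P.coroot s v + 2 * P.coroot t v) / (4 - p * q),
          v - ((2 * P.coroot s v + p * P.coroot t v) / (4 - p * q)) • P.α s
            - ((q * P.coroot s v + 2 * P.coroot t v) / (4 - p * q)) • P.α t, ?_, ?_, ?_⟩
  · rw [map_sub, map_sub, map_smul, map_smul, P.diag s, hp, smul_eq_mul, smul_eq_mul]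
    field_simp
    ring
  · rw [map_sub, map_sub, map_smul, map_smul, P.diag t, hq, smul_eq_mul, smul_eq_mul]
    field_simp
    ring
  · abel

lemma step_s (p : ℝ) (hp : P.coroot s (P.α t) = -p) {w : V} (hw : P.coroot s w = 0) (a b : ℝ) :
    P.reflE s (a • P.α s + b • P.α t + w) = (p * b - a) • P.α s + b • P.α t + w := by
  rw [reflE_apply]
  simp only [map_add, map_smul, P.diag s, hp, hw, smul_eq_mul]
  module

lemma step_t (q : ℝ) (hq : P.coroot t (P.α s) = -q) {w : V} (hw : P.coroot t w = 0) (a b : ℝ) :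
    P.reflE t (a • P.α s + b • P.α t + w) = a • P.α s + (q * a - b) • P.α t + w := by
  rw [reflE_apply]
  simp only [map_add, map_smul, P.diag t, hq, hw, smul_eq_mul]
  module

private lemma mulap (g h : V ≃ₗ[ℝ] V) (x : V) : (g * h) x = g (h x) := rfl

lemma flip00 (hp : P.coroot s (P.α t) = -(0:ℝ)) (hq : P.coroot t (P.α s) = -(0:ℝ)) :
    P.wordProd (awt s t 2) = P.wordProd (awt t s 2) := by
  refine LinearEquiv.ext fun v => ?_
  obtain ⟨a, b, w, hws, hwt, rfl⟩ := P.dec_exists s t 0 0 hp hq (by norm_num) v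
  have Hs := P.step_s s t 0 hp hws
  have Ht := P.step_t s t 0 hq hwt
  have e1 : awt s t 2 = [s, t] := by norm_num [awt, Nat.even_iff]
  have e2 : awt t s 2 = [t, s] := by norm_num [awt, Nat.even_iff]
  rw [e1, e2]
  simp only [wordProd_cons, wordProd_nil, mul_one, mulap]
  simp only [Hs, Ht]
  module

lemma flip11 (hp : P.coroot s (P.α t) = -(1:ℝ)) (hq : P.coroot t (P.α s) = -(1:ℝ)) :
    P.wordProd (awt s t 3) = P.wordProd (awt t s 3) := by
  refine LinearEquiv.ext fun v => ?_
  obtain ⟨a, b, w, hws, hwt, rfl⟩ := P.dec_exists s t 1 1 hp hq (by norm_num) v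
  have Hs := P.step_s s t 1 hp hws
  have Ht := P.step_t s t 1 hq hwt
  have e1 : awt s t 3 = [t, s, t] := by norm_num [awt, Nat.even_iff]
  have e2 : awt t s 3 = [s, t, s] := by norm_num [awt, Nat.even_iff]
  rw [e1, e2]
  simp only [wordProd_cons, wordProd_nil, mul_one, mulap]
  simp only [Hs, Ht]
  module

lemma flip12 (hp : P.coroot s (P.α t) = -(1:ℝ)) (hq : P.coroot t (P.α s) = -(2:ℝ)) :
    P.wordProd (awt s t 4) = P.wordProd (awt t s 4) := by
  refine LinearEquiv.ext fun v => ?_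
  obtain ⟨a, b, w, hws, hwt, rfl⟩ := P.dec_exists s t 1 2 hp hq (by norm_num) v
  have Hs := P.step_s s t 1 hp hws
  have Ht := P.step_t s t 2 hq hwt
  have e1 : awt s t 4 = [s, t, s, t] := by norm_num [awt, Nat.even_iff]
  have e2 : awt t s 4 = [t, s, t, s] := by norm_num [awt, Nat.even_iff]
  rw [e1, e2]
  simp only [wordProd_cons, wordProd_nil, mul_one, mulap]
  simp only [Hs, Ht]
  module

lemma flip13 (hp : P.coroot s (P.α t) = -(1:ℝ)) (hq : P.coroot t (P.α s) = -(3:ℝ)) :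
    P.wordProd (awt s t 6) = P.wordProd (awt t s 6) := by
  refine LinearEquiv.ext fun v => ?_
  obtain ⟨a, b, w, hws, hwt, rfl⟩ := P.dec_exists s t 1 3 hp hq (by norm_num) v
  have Hs := P.step_s s t 1 hp hws
  have Ht := P.step_t s t 3 hq hwt
  have e1 : awt s t 6 = [s, t, s, t, s, t] := by norm_num [awt, Nat.even_iff]
  have e2 : awt t s 6 = [t, s, t, s, t, s] := by norm_num [awt, Nat.even_iff]
  rw [e1, e2]
  simp only [wordProd_cons, wordProd_nil, mul_one, mulap]
  simp only [Hs, Ht]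
  module

/- ---------------- reduction to alternating words ---------------- -/

lemma altify : ∀ ω : List I, (∀ x ∈ ω, x = s ∨ x = t) →
    ∃ ω' : List I, (∀ x ∈ ω', x = s ∨ x = t) ∧ ω'.Chain' (· ≠ ·) ∧
      ω'.length ≤ ω.length ∧ P.wordProd ω' = P.wordProd ω := by
  intro ω
  induction ω with
  | nil => intro _; exact ⟨[], by simp, by simp [List.Chain'], le_refl _, rfl⟩
  | cons a rest ih =>
    intro hmem
    obtain ⟨r', hmem', hch', hlen', hprod'⟩ := ih (fun x hx => hmem x (List.mem_cons_of_mem _ hx))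
    cases r' with
    | nil =>
      refine ⟨[a], ?_, by simp [List.Chain'], by simp, ?_⟩
      · intro x hx
        have hxa : x = a := by simpa using hx
        subst hxa
        exact hmem x (by simp)
      · rw [wordProd_singleton, wordProd_cons, ← hprod', wordProd_nil, mul_one]
    | cons b tl =>
      by_cases hba : b = a
      · subst hba
        refine ⟨tl, fun x hx => hmem' x (List.mem_cons_of_mem _ hx), hch'.tail, ?_, ?_⟩
        · have : tl.length + 1 ≤ rest.length := by
            have := hlen'; simpa using this
          simp only [List.length_cons]
          omega
        · rw [wordProd_cons, ← hprod', wordProd_cons, ← mul_assoc, reflE_mul_self, one_mul]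
      · refine ⟨a :: b :: tl, ?_, List.isChain_cons_cons.mpr ⟨fun h => hba h.symm, hch'⟩, ?_, ?_⟩
        · intro x hx
          rcases List.mem_cons.mp hx with rfl | hx
          · exact hmem x (by simp)
          · exact hmem' x hx
        · simp only [List.length_cons]
          have := hlen'; simp at this; omega
        · rw [wordProd_cons, hprod', ← wordProd_cons]

/- ---------------- the rank-two alternative ---------------- -/

lemma rank2_finish (hst : s ≠ t) (m : ℕ) (hm : 2 ≤ m)
    (hflip : P.wordProd (awt s t m) = P.wordProd (awt t s m))
    (hposk : ∀ k' < m, ∃ c₁ c₂ : ℝ, 0 ≤ c₁ ∧ 0 ≤ c₂ ∧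
        P.wordProd (awt s t k') (P.α s) = c₁ • P.α s + c₂ • P.α t)
    (k : ℕ) :
    (∃ c₁ c₂ : ℝ, 0 ≤ c₁ ∧ 0 ≤ c₂ ∧
        P.wordProd (awt s t k) (P.α s) = c₁ • P.α s + c₂ • P.α t) ∨
    (∃ ω' : List I, (∀ x ∈ ω', x = s ∨ x = t) ∧ ω'.Chain' (· ≠ ·) ∧
        ω'.length < (awt s t k).length ∧ P.wordProd ω' = P.wordProd (awt s t k)) ∨
    (∃ ω'' : List I, (∀ x ∈ ω'', x = s ∨ x = t) ∧ ω''.length < (awt s t k).length ∧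
        P.wordProd ω'' = P.wordProd (awt s t k) * P.reflE s) := by
  have hm1 : m - 1 + 1 = m := by omega
  rcases lt_or_ge k m with hkm | hkm
  · exact Or.inl (hposk k hkm)
  rcases Nat.eq_or_lt_of_le hkm with rfl | hkgt
  · -- k = m
    refine Or.inr (Or.inr ⟨awt s t (m - 1), awt_mem s t _, ?_, ?_⟩)
    · simp only [awt_length]; omega
    · rw [hflip]
      have e : awt t s m = awt s t (m-1) ++ [s] := by
        conv_lhs => rw [← hm1]
        exact awt_snoc t s (m-1)
      rw [e, wordProd_concat, mul_assoc, reflE_mul_self, mul_one]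
  · -- k > m
    obtain ⟨j, rfl⟩ := Nat.exists_eq_add_of_lt hkgt
    refine Or.inr (Or.inl ?_)
    have claim : ∀ j' : ℕ, ∃ ω' : List I, (∀ x ∈ ω', x = s ∨ x = t) ∧ ω'.Chain' (· ≠ ·) ∧
        ω'.length < m + j' + 1 ∧ P.wordProd ω' = P.wordProd (awt s t (m + j' + 1)) := by
      intro j'
      induction j' with
      | zero =>
        refine ⟨awt t s (m-1), fun x hx => (awt_mem t s _ x hx).symm,
          awt_chain t s hst.symm _, ?_, ?_⟩
        · simp only [awt_length]; omega
        · show P.wordProd (awt t s (m-1)) = P.wordProd (awt s t (m + 1))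
          rw [awt_head s t m, wordProd_cons, hflip]
          have e : awt t s m = (if Even (m-1) then s else t) :: awt t s (m-1) := by
            conv_lhs => rw [← hm1]
            rfl
          have hc : (if Even m then t else s) = (if Even (m-1) then s else t) := by
            obtain ⟨m', rfl⟩ : ∃ m', m = m' + 1 := ⟨m - 1, by omega⟩
            simp only [Nat.add_sub_cancel]
            by_cases h : Even m' <;> simp [Nat.even_add_one, h]
          rw [e, wordProd_cons, ← mul_assoc, hc, reflE_mul_self, one_mul]
      | succ j' ihj =>
        obtain ⟨ω', hmem', hch', hlen', hprod'⟩ := ihj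
        have hmem2 : ∀ x ∈ (if Even (m + j' + 1) then t else s) :: ω', x = s ∨ x = t := by
          intro x hx
          rcases List.mem_cons.mp hx with rfl | hx
          · split <;> simp
          · exact hmem' x hx
        obtain ⟨ω'', hmem'', hch'', hlen'', hprod''⟩ :=
          P.altify s t ((if Even (m + j' + 1) then t else s) :: ω') hmem2
        refine ⟨ω'', hmem'', hch'', ?_, ?_⟩
        · simp only [List.length_cons] at hlen''
          omega
        · rw [hprod'', wordProd_cons, hprod', ← wordProd_cons, ← awt_head]
          rfl
    obtain ⟨ω', h1, h2, h3, h4⟩ := claim j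
    exact ⟨ω', h1, h2, by simpa only [awt_length] using h3, h4⟩

end GCMRep

namespace GCMRep

variable {I V : Type*} [AddCommGroup V] [Module ℝ V] (P : GCMRep I V)

lemma rank2_lemma (s t : I) (hst : s ≠ t) (ωd : List I)
    (hmem : ∀ x ∈ ωd, x = s ∨ x = t) (hch : ωd.Chain' (· ≠ ·)) :
    (∃ c₁ c₂ : ℝ, 0 ≤ c₁ ∧ 0 ≤ c₂ ∧
        P.wordProd ωd (P.α s) = c₁ • P.α s + c₂ • P.α t) ∨
    (∃ ω' : List I, (∀ x ∈ ω', x = s ∨ x = t) ∧ ω'.Chain' (· ≠ ·) ∧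
        ω'.length < ωd.length ∧ P.wordProd ω' = P.wordProd ωd) ∨
    (∃ ω'' : List I, (∀ x ∈ ω'', x = s ∨ x = t) ∧ ω''.length < ωd.length ∧
        P.wordProd ω'' = P.wordProd ωd * P.reflE s) := by
  rcases List.eq_nil_or_concat ωd with rfl | ⟨L, x, hLx⟩
  · exact Or.inl ⟨1, 0, zero_le_one, le_refl 0, by simp⟩
  rw [List.concat_eq_append] at hLx
  subst hLx
  rcases hmem x (by simp) with rfl | rfl
  · -- the word ends in s
    refine Or.inr (Or.inr ⟨L, fun y hy => hmem y (by simp [hy]), by simp, ?_⟩)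
    rw [wordProd_concat, mul_assoc, reflE_mul_self, mul_one]
  · -- the word ends in t
    have hne : (L ++ [x]) ≠ [] := by simp
    have hlast : (L ++ [x]).getLast hne = x := by simp
    have hωd : L ++ [x] = awt s x (L ++ [x]).length :=
      eq_awt_of_chain s x hst _ hmem hch hne hlast
    set t := x
    set k := (L ++ [t]).length with hk
    obtain ⟨ns, hns⟩ := P.integral s t
    obtain ⟨nt, hnt⟩ := P.integral t s
    have hns0 : ns ≤ 0 := by
      have h := P.offdiag_nonpos s t hst
      rw [hns] at h
      exact_mod_cast h
    have hnt0 : nt ≤ 0 := by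
      have h := P.offdiag_nonpos t s hst.symm
      rw [hnt] at h
      exact_mod_cast h
    have hp : P.coroot s (P.α t) = -(-(ns:ℝ)) := by rw [hns]; ring
    have hq : P.coroot t (P.α s) = -(-(nt:ℝ)) := by rw [hnt]; ring
    have hp0 : (0:ℝ) ≤ -(ns:ℝ) := by
      have : (ns:ℝ) ≤ 0 := by exact_mod_cast hns0
      linarith
    have hq0 : (0:ℝ) ≤ -(nt:ℝ) := by
      have : (nt:ℝ) ≤ 0 := by exact_mod_cast hnt0
      linarith
    by_cases h4 : (4:ℝ) ≤ (-(ns:ℝ)) * (-(nt:ℝ))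
    · left
      obtain ⟨hX, hY⟩ := xyseq_nonneg hp0 hq0 h4 k
      exact ⟨_, _, hX, hY, by rw [hωd]; exact P.wordProd_awt_alpha s t _ _ hp hq k⟩
    · push_neg at h4
      -- integer analysis
      have hprod4 : ns * nt < 4 := by
        have : ((ns * nt : ℤ) : ℝ) < 4 := by push_cast; nlinarith [h4]
        exact_mod_cast this
      have hzz : ns = 0 → nt = 0 := by
        intro h
        have h2 := P.symm_zero s t (by rw [hns, h]; norm_num)
        rw [hnt] at h2
        exact_mod_cast h2
      have hzz' : nt = 0 → ns = 0 := by
        intro h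
        have h2 := P.symm_zero t s (by rw [hnt, h]; norm_num)
        rw [hns] at h2
        exact_mod_cast h2
      have hcase : (ns = 0 ∧ nt = 0) ∨ (ns = -1 ∧ nt = -1) ∨ (ns = -1 ∧ nt = -2) ∨
          (ns = -2 ∧ nt = -1) ∨ (ns = -1 ∧ nt = -3) ∨ (ns = -3 ∧ nt = -1) := by
        by_cases hns_z : ns = 0
        · exact Or.inl ⟨hns_z, hzz hns_z⟩
        by_cases hnt_z : nt = 0
        · exact absurd (hzz' hnt_z) hns_z
        have h1 : ns ≤ -1 := by omega
        have h2 : nt ≤ -1 := by omega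
        have h3 : -3 ≤ ns := by nlinarith
        have h5 : -3 ≤ nt := by nlinarith
        interval_cases ns <;> interval_cases nt <;> omega
      rcases hcase with ⟨h1, h2⟩ | ⟨h1, h2⟩ | ⟨h1, h2⟩ | ⟨h1, h2⟩ | ⟨h1, h2⟩ | ⟨h1, h2⟩ <;> subst h1 <;> subst h2
      · -- (0,0), m = 2
        have hp' : P.coroot s (P.α t) = -(0:ℝ) := by rw [hns]; norm_num
        have hq' : P.coroot t (P.α s) = -(0:ℝ) := by rw [hnt]; norm_num
        have hflip := P.flip00 s t hp' hq'
        have hposk : ∀ k' < 2, ∃ c₁ c₂ : ℝ, 0 ≤ c₁ ∧ 0 ≤ c₂ ∧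
            P.wordProd (awt s t k') (P.α s) = c₁ • P.α s + c₂ • P.α t := by
          intro k' hk'
          refine ⟨(xyseq 0 0 k').1, (xyseq 0 0 k').2, ?_, ?_,
            P.wordProd_awt_alpha s t 0 0 hp' hq' k'⟩ <;>
            interval_cases k' <;> norm_num [xyseq, Nat.even_iff]
        have H := P.rank2_finish s t hst 2 (by norm_num) hflip hposk k
        rw [← hωd] at H
        simpa [← hk] using H
      · -- (-1,-1), m = 3
        have hp' : P.coroot s (P.α t) = -(1:ℝ) := by rw [hns]; norm_num
        have hq' : P.coroot t (P.α s) = -(1:ℝ) := by rw [hnt]; norm_num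
        have hflip := P.flip11 s t hp' hq'
        have hposk : ∀ k' < 3, ∃ c₁ c₂ : ℝ, 0 ≤ c₁ ∧ 0 ≤ c₂ ∧
            P.wordProd (awt s t k') (P.α s) = c₁ • P.α s + c₂ • P.α t := by
          intro k' hk'
          refine ⟨(xyseq 1 1 k').1, (xyseq 1 1 k').2, ?_, ?_,
            P.wordProd_awt_alpha s t 1 1 hp' hq' k'⟩ <;>
            interval_cases k' <;> norm_num [xyseq, Nat.even_iff]
        have H := P.rank2_finish s t hst 3 (by norm_num) hflip hposk k
        rw [← hωd] at H
        simpa [← hk] using H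
      · -- (-1,-2), m = 4
        have hp' : P.coroot s (P.α t) = -(1:ℝ) := by rw [hns]; norm_num
        have hq' : P.coroot t (P.α s) = -(2:ℝ) := by rw [hnt]; norm_num
        have hflip := P.flip12 s t hp' hq'
        have hposk : ∀ k' < 4, ∃ c₁ c₂ : ℝ, 0 ≤ c₁ ∧ 0 ≤ c₂ ∧
            P.wordProd (awt s t k') (P.α s) = c₁ • P.α s + c₂ • P.α t := by
          intro k' hk'
          refine ⟨(xyseq 1 2 k').1, (xyseq 1 2 k').2, ?_, ?_,
            P.wordProd_awt_alpha s t 1 2 hp' hq' k'⟩ <;>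
            interval_cases k' <;> norm_num [xyseq, Nat.even_iff]
        have H := P.rank2_finish s t hst 4 (by norm_num) hflip hposk k
        rw [← hωd] at H
        simpa [← hk] using H
      · -- (-2,-1), m = 4 : use flip12 with s and t swapped
        have hp' : P.coroot s (P.α t) = -(2:ℝ) := by rw [hns]; norm_num
        have hq' : P.coroot t (P.α s) = -(1:ℝ) := by rw [hnt]; norm_num
        have hflip := (P.flip12 t s hq' hp').symm
        have hposk : ∀ k' < 4, ∃ c₁ c₂ : ℝ, 0 ≤ c₁ ∧ 0 ≤ c₂ ∧
            P.wordProd (awt s t k') (P.α s) = c₁ • P.α s + c₂ • P.α t := by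
          intro k' hk'
          refine ⟨(xyseq 2 1 k').1, (xyseq 2 1 k').2, ?_, ?_,
            P.wordProd_awt_alpha s t 2 1 hp' hq' k'⟩ <;>
            interval_cases k' <;> norm_num [xyseq, Nat.even_iff]
        have H := P.rank2_finish s t hst 4 (by norm_num) hflip hposk k
        rw [← hωd] at H
        simpa [← hk] using H
      · -- (-1,-3), m = 6
        have hp' : P.coroot s (P.α t) = -(1:ℝ) := by rw [hns]; norm_num
        have hq' : P.coroot t (P.α s) = -(3:ℝ) := by rw [hnt]; norm_num
        have hflip := P.flip13 s t hp' hq'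
        have hposk : ∀ k' < 6, ∃ c₁ c₂ : ℝ, 0 ≤ c₁ ∧ 0 ≤ c₂ ∧
            P.wordProd (awt s t k') (P.α s) = c₁ • P.α s + c₂ • P.α t := by
          intro k' hk'
          refine ⟨(xyseq 1 3 k').1, (xyseq 1 3 k').2, ?_, ?_,
            P.wordProd_awt_alpha s t 1 3 hp' hq' k'⟩ <;>
            interval_cases k' <;> norm_num [xyseq, Nat.even_iff]
        have H := P.rank2_finish s t hst 6 (by norm_num) hflip hposk k
        rw [← hωd] at H
        simpa [← hk] using H
      · -- (-3,-1), m = 6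
        have hp' : P.coroot s (P.α t) = -(3:ℝ) := by rw [hns]; norm_num
        have hq' : P.coroot t (P.α s) = -(1:ℝ) := by rw [hnt]; norm_num
        have hflip := (P.flip13 t s hq' hp').symm
        have hposk : ∀ k' < 6, ∃ c₁ c₂ : ℝ, 0 ≤ c₁ ∧ 0 ≤ c₂ ∧
            P.wordProd (awt s t k') (P.α s) = c₁ • P.α s + c₂ • P.α t := by
          intro k' hk'
          refine ⟨(xyseq 3 1 k').1, (xyseq 3 1 k').2, ?_, ?_,
            P.wordProd_awt_alpha s t 3 1 hp' hq' k'⟩ <;>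
            interval_cases k' <;> norm_num [xyseq, Nat.even_iff]
        have H := P.rank2_finish s t hst 6 (by norm_num) hflip hposk k
        rw [← hωd] at H
        simpa [← hk] using H

end GCMRep

namespace GCMRep

variable {I V : Type*} [AddCommGroup V] [Module ℝ V] (P : GCMRep I V)

theorem isPos_wordProd_alpha [Fintype I] :
    ∀ (n : ℕ) (w : V ≃ₗ[ℝ] V), w ∈ P.weyl → P.wlen w ≤ n →
      ∀ i : I, P.wlen w ≤ P.wlen (w * P.reflE i) → P.IsPos (w (P.α i)) := by
  intro n
  induction n with
  | zero =>
    intro w hw hlen i _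
    obtain ⟨ω, hπ, hl⟩ := P.exists_word_wlen hw
    have hω : ω = [] := List.length_eq_zero_iff.mp (by omega)
    subst hω
    rw [← hπ]
    simpa using P.isPos_alpha i
  | succ n IH =>
    intro w hw hlen i hgei
    by_cases hn : P.wlen w ≤ n
    · exact IH w hw hn i hgei
    have hwn : P.wlen w = n + 1 := by omega
    obtain ⟨ω, hπ, hl⟩ := P.exists_word_wlen hw
    rcases List.eq_nil_or_concat ω with rfl | ⟨ω₀, t', hLx⟩
    · simp at hl; omega
    rw [List.concat_eq_append] at hLx
    subst hLx
    have hlω₀ : ω₀.length = n := by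
      simp only [List.length_append, List.length_singleton] at hl
      omega
    have hwt : w * P.reflE t' = P.wordProd ω₀ := by
      rw [← hπ, wordProd_concat, mul_assoc, reflE_mul_self, mul_one]
    have hlwt : P.wlen (w * P.reflE t') ≤ n := by
      rw [hwt]
      have := P.wlen_le (rfl : P.wordProd ω₀ = P.wordProd ω₀)
      omega
    have hti : t' ≠ i := by
      rintro rfl
      omega
    set S : Set ℕ := {c | ∃ ωv ωd : List I,
        (∀ x ∈ ωd, x = i ∨ x = t') ∧ ωd.Chain' (· ≠ ·) ∧
        P.wordProd ωv * P.wordProd ωd = w ∧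
        ωv.length + ωd.length ≤ n + 1 ∧ c = ωv.length * (n + 3) + ωd.length} with hS
    have hS0 : (n * (n + 3) + 1) ∈ S := by
      refine ⟨ω₀, [t'], by simp, by simp [List.Chain'], ?_, by simp; omega, by simp [hlω₀]⟩
      rw [wordProd_singleton, ← hwt, mul_assoc, reflE_mul_self, mul_one]
    have hSne : S.Nonempty := ⟨_, hS0⟩
    obtain ⟨ωv, ωd, hDd, hchd, hprod, hsum, hcval⟩ := Nat.sInf_mem hSne
    have hinit : sInf S ≤ n * (n + 3) + 1 := Nat.sInf_le hS0
    have hlv : ωv.length ≤ n := by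
      by_contra hcon
      have h1 : n + 1 ≤ ωv.length := by omega
      have h2 : (n + 1) * (n + 3) ≤ ωv.length * (n + 3) := Nat.mul_le_mul_right _ h1
      have h3 : (n + 1) * (n + 3) = n * (n + 3) + (n + 3) := by ring
      have h6 : ωv.length * (n + 3) ≤ sInf S := by rw [hcval]; omega
      linarith
    have hkey : ∀ x : I, (x = i ∨ x = t') →
        P.wlen (P.wordProd ωv) ≤ P.wlen (P.wordProd ωv * P.reflE x) := by
      intro x hx
      by_contra hlt
      push_neg at hlt
      obtain ⟨u, hu, hul⟩ := P.exists_word_wlen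
        (mul_mem (P.wordProd_mem_weyl ωv) (P.reflE_mem_weyl x))
      have hwv : P.wlen (P.wordProd ωv) ≤ ωv.length := P.wlen_le rfl
      have hulv : u.length < ωv.length := by omega
      have hA : (u.length + 1) * (n + 3) ≤ ωv.length * (n + 3) :=
        Nat.mul_le_mul_right _ (by omega)
      have hA' : (u.length + 1) * (n + 3) = u.length * (n + 3) + (n + 3) := by ring
      have hAB : u.length * (n + 3) + (n + 3) ≤ ωv.length * (n + 3) := by
        rw [← hA']; exact hA
      cases ωd with
      | nil =>
        simp only [List.length_nil, add_zero] at hcval hsum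
        have hmem2 : (u.length * (n + 3) + 1) ∈ S := by
          refine ⟨u, [x], ?_, by simp [List.Chain'], ?_, by simp; omega, by simp⟩
          · intro y hy
            have hyx : y = x := by simpa using hy
            subst hyx
            exact hx
          · rw [wordProd_singleton, hu, mul_assoc, reflE_mul_self, mul_one]
            simpa using hprod
        have hle2 := Nat.sInf_le hmem2
        linarith
      | cons b tl =>
        simp only [List.length_cons] at hcval hsum
        by_cases hbx : b = x
        · subst hbx
          have hmem2 : (u.length * (n + 3) + tl.length) ∈ S := by
            refine ⟨u, tl, fun y hy => hDd y (List.mem_cons_of_mem _ hy), hchd.tail,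
              ?_, by omega, rfl⟩
            rw [hu, mul_assoc, ← wordProd_cons]
            exact hprod
          have hle2 := Nat.sInf_le hmem2
          linarith
        · have hmem2 : (u.length * (n + 3) + (tl.length + 2)) ∈ S := by
            refine ⟨u, x :: b :: tl, ?_, ?_, ?_,
              by simp only [List.length_cons]; omega, by simp only [List.length_cons]; try ring⟩
            · intro y hy
              rcases List.mem_cons.mp hy with rfl | hy
              · exact hx
              · exact hDd y hy
            · exact List.isChain_cons_cons.mpr ⟨fun h => hbx h.symm, hchd⟩
            · rw [wordProd_cons, hu]
              have hmid : (P.wordProd ωv * P.reflE x) * (P.reflE x * P.wordProd (b :: tl))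
                  = P.wordProd ωv * P.wordProd (b :: tl) := by
                rw [mul_assoc, ← mul_assoc (P.reflE x), reflE_mul_self, one_mul]
              rw [hmid]
              exact hprod
          have hle2 := Nat.sInf_le hmem2
          linarith
    have hvmem := P.wordProd_mem_weyl ωv
    have hvlen : P.wlen (P.wordProd ωv) ≤ n := le_trans (P.wlen_le rfl) hlv
    have hpos_i : P.IsPos (P.wordProd ωv (P.α i)) := IH _ hvmem hvlen i (hkey i (Or.inl rfl))
    have hpos_t : P.IsPos (P.wordProd ωv (P.α t')) := IH _ hvmem hvlen t' (hkey t' (Or.inr rfl))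
    rcases P.rank2_lemma i t' (fun h => hti h.symm) ωd hDd hchd with
      ⟨c₁, c₂, h₁, h₂, heq⟩ | ⟨ω', hm', hch', hlt', hπ'⟩ | ⟨ω'', hm'', hlt'', hπ''⟩
    · have happ : w (P.α i) = P.wordProd ωv (P.wordProd ωd (P.α i)) := by
        rw [← hprod]; rfl
      rw [happ, heq, map_add, map_smul, map_smul]
      exact P.isPos_combo c₁ c₂ h₁ h₂ hpos_i hpos_t
    · exfalso
      have hmem2 : (ωv.length * (n + 3) + ω'.length) ∈ S :=
        ⟨ωv, ω', hm', hch', by rw [hπ']; exact hprod, by omega, rfl⟩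
      have hle2 := Nat.sInf_le hmem2
      linarith
    · exfalso
      have hwri : w * P.reflE i = P.wordProd (ωv ++ ω'') := by
        rw [wordProd_append, hπ'', ← mul_assoc, hprod]
      have h5 : P.wlen (w * P.reflE i) ≤ ωv.length + ω''.length := by
        have := P.wlen_le hwri.symm
        simpa using this
      omega

theorem isNeg_of_wlen_lt [Fintype I] {w : V ≃ₗ[ℝ] V} (hw : w ∈ P.weyl) (i : I)
    (h : P.wlen (w * P.reflE i) < P.wlen w) : P.IsPos (-(w (P.α i))) := by
  have hw' : w * P.reflE i ∈ P.weyl := mul_mem hw (P.reflE_mem_weyl i)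
  have h2 : (w * P.reflE i) * P.reflE i = w := by
    rw [mul_assoc, reflE_mul_self, mul_one]
  have h3 : P.wlen (w * P.reflE i) ≤ P.wlen ((w * P.reflE i) * P.reflE i) := by
    rw [h2]; omega
  have hres := P.isPos_wordProd_alpha (P.wlen (w * P.reflE i)) _ hw' le_rfl i h3
  have h4 : (w * P.reflE i) (P.α i) = -(w (P.α i)) := by
    show w (P.reflE i (P.α i)) = -(w (P.α i))
    rw [P.reflE_alpha_self i, map_neg]
  rwa [h4] at hres

/-- The key uniqueness statement: two dominant points in the same Weyl orbit coincide. -/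
theorem eq_of_weyl_apply_eq [Fintype I] {lam mu : V}
    (hl : lam ∈ P.domChamber) (hm : mu ∈ P.domChamber)
    {w : V ≃ₗ[ℝ] V} (hw : w ∈ P.weyl) (heq : w lam = mu) : lam = mu := by
  classical
  set T : Set ℕ := {n | ∃ ω : List I, P.wordProd ω lam = mu ∧ ω.length = n} with hT
  have hTne : T.Nonempty := by
    obtain ⟨ω, hω⟩ := P.exists_word_of_mem_weyl hw
    exact ⟨ω.length, ω, by rw [hω]; exact heq, rfl⟩
  obtain ⟨ω, hωlam, hωlen⟩ := Nat.sInf_mem hTne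
  rcases List.eq_nil_or_concat ω with rfl | ⟨ω₀, i, hLx⟩
  · simpa using hωlam
  rw [List.concat_eq_append] at hLx
  subst hLx
  exfalso
  have hc0 : 0 ≤ P.coroot i lam := hl i
  by_cases hcz : P.coroot i lam = 0
  · have hshort : P.wordProd ω₀ lam = mu := by
      rw [← hωlam, wordProd_concat]
      show P.wordProd ω₀ lam = P.wordProd ω₀ (P.reflE i lam)
      rw [P.reflE_fix i hcz]
    have hin : ω₀.length ∈ T := ⟨ω₀, hshort, rfl⟩
    have := Nat.sInf_le hin
    simp only [List.length_append, List.length_singleton] at hωlen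
    omega
  · have hcpos : 0 < P.coroot i lam := lt_of_le_of_ne hc0 (Ne.symm hcz)
    have hWlen : P.wlen (P.wordProd (ω₀ ++ [i])) = (ω₀ ++ [i]).length := by
      refine le_antisymm (P.wlen_le rfl) ?_
      by_contra hlt
      push_neg at hlt
      obtain ⟨u, hu, hul⟩ := P.exists_word_wlen (P.wordProd_mem_weyl (ω₀ ++ [i]))
      have hin : u.length ∈ T := ⟨u, by rw [hu]; exact hωlam, rfl⟩
      have := Nat.sInf_le hin
      omega
    have hwrit : P.wordProd (ω₀ ++ [i]) * P.reflE i = P.wordProd ω₀ := by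
      rw [wordProd_concat, mul_assoc, reflE_mul_self, mul_one]
    have hlt2 : P.wlen (P.wordProd (ω₀ ++ [i]) * P.reflE i)
        < P.wlen (P.wordProd (ω₀ ++ [i])) := by
      rw [hwrit, hWlen]
      have := P.wlen_le (rfl : P.wordProd ω₀ = P.wordProd ω₀)
      simp only [List.length_append, List.length_singleton]
      omega
    have LT : ∀ u : List I, P.dual.wlen (P.dual.wordProd u) = P.wlen (P.wordProd u.reverse) := by
      intro u
      apply le_antisymm
      · obtain ⟨ω₁, h1, h1l⟩ := P.exists_word_wlen (P.wordProd_mem_weyl u.reverse)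
        have h2 : P.dual.wordProd ω₁.reverse = P.dual.wordProd u := by
          refine LinearEquiv.ext fun f => LinearMap.ext fun x => ?_
          rw [dual_wordProd_apply, dual_wordProd_apply, List.reverse_reverse, h1]
        have := P.dual.wlen_le h2
        simpa [h1l] using this
      · obtain ⟨ω₂, h2, h2l⟩ := P.dual.exists_word_wlen (P.dual.wordProd_mem_weyl u)
        have h3 : P.wordProd ω₂.reverse = P.wordProd u.reverse := by
          refine LinearEquiv.ext fun x => ?_
          have hzero : P.wordProd ω₂.reverse x - P.wordProd u.reverse x = 0 := by
            apply (Module.forall_dual_apply_eq_zero_iff ℝ _).mp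
            intro φ
            rw [map_sub, ← P.dual_wordProd_apply ω₂, ← P.dual_wordProd_apply u, h2, sub_self]
          exact sub_eq_zero.mp hzero
        have := P.wlen_le h3
        simpa [h2l] using this
    have hQlt : P.dual.wlen (P.dual.wordProd (ω₀ ++ [i]) * P.dual.reflE i)
        < P.dual.wlen (P.dual.wordProd (ω₀ ++ [i])) := by
      have e1 : P.dual.wordProd (ω₀ ++ [i]) * P.dual.reflE i
          = P.dual.wordProd ((ω₀ ++ [i]) ++ [i]) := (P.dual.wordProd_concat _ i).symm
      rw [e1, LT, LT]
      have e2 : P.wordProd (((ω₀ ++ [i]) ++ [i]).reverse) = P.wordProd ω₀.reverse := by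
        have h6 : ((ω₀ ++ [i]) ++ [i]).reverse = i :: i :: ω₀.reverse := by simp
        rw [h6, wordProd_cons, wordProd_cons, ← mul_assoc, reflE_mul_self, one_mul]
      rw [e2, P.wordProd_reverse ω₀, P.wordProd_reverse (ω₀ ++ [i])]
      rw [P.wlen_inv (P.wordProd_mem_weyl _), P.wlen_inv (P.wordProd_mem_weyl _)]
      rw [← hwrit]
      exact hlt2
    have hneg := P.dual.isNeg_of_wlen_lt (P.dual.wordProd_mem_weyl (ω₀ ++ [i])) i hQlt
    obtain ⟨e, he, heq2⟩ := hneg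
    have hval : (P.dual.wordProd (ω₀ ++ [i]) (P.dual.α i)) mu = P.coroot i lam := by
      rw [dual_wordProd_apply]
      have h6 : P.wordProd ((ω₀ ++ [i]).reverse) mu = lam := by
        rw [P.wordProd_reverse, ← hωlam]
        exact (P.wordProd (ω₀ ++ [i])).symm_apply_apply lam
      rw [h6]
      rfl
    have hcongr := DFunLike.congr_fun heq2 mu
    have hnonneg : 0 ≤ (∑ j, e j • P.dual.α j) mu := by
      rw [LinearMap.sum_apply]
      refine Finset.sum_nonneg fun j _ => ?_
      rw [LinearMap.smul_apply, smul_eq_mul]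
      exact mul_nonneg (he j) (hm j)
    have h7 : (-(P.dual.wordProd (ω₀ ++ [i]) (P.dual.α i))) mu = -(P.coroot i lam) := by
      rw [LinearMap.neg_apply, hval]
    rw [h7] at hcongr
    rw [← hcongr] at hnonneg
    linarith

end GCMRep

/-- The dominant chamber `C` is a fundamental domain for the action of the Weyl group `W`
on the Tits cone `Y`: every `W`-orbit in `Y` meets `C` in exactly one point. -/
theorem domChamber_fundamental_domain
    {I V : Type*} [Fintype I] [AddCommGroup V] [Module ℝ V] (s : GCMRep I V) :
    ∀ y ∈ s.titsCone, ∃! x : V, x ∈ s.domChamber ∧ ∃ w ∈ s.weyl, y = w x := by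
  rintro y ⟨w, hw, x, hx, rfl⟩
  refine ⟨x, ⟨hx, w, hw, rfl⟩, ?_⟩
  rintro x' ⟨hx', w', hw', hyx'⟩
  have hmem : w'⁻¹ * w ∈ s.weyl := mul_mem (inv_mem hw') hw
  have happ : (w'⁻¹ * w) x = x' := by
    show w'⁻¹ (w x) = x'
    rw [hyx']
    exact w'.symm_apply_apply x'
  exact (s.eq_of_weyl_apply_eq hx hx' hmem happ).symm
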